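/- arXiv:1612.07806 — 2 statements merged into one kernel-verified Lean document; each statement's English description precedes it below -/
import Mathlib

section
/- Fix N, n, s ≤ N, σ ≤ n, and let z ∈ ℂ^{N·n} be indexed by Fin N × Fin n. Suppose for each i ∈ Fin N a set T_i ⊆ Fin n with |T_i| = σ is chosen such that ∑_{j∈T_i}|z(i,j)|² ≥ ∑_{j∈T}|z(i,j)|² for every T ⊆ Fin n with |T| = σ, and suppose S ⊆ Fin N with |S| = s is chosen such that ∑_{j∈T_i}|z(i,j)|² ≥ ∑_{j∈T_{i'}}|z(i',j)|² for every i ∈ S and every i' ∉ S. Let Ω* = ⋃_{i∈S} {i}×T_i. Then for every (s,σ)-sparse support set Σ ⊆ Fin N × Fin n, ‖z·P_{Ω*}‖ ≥ ‖z·P_Σ‖; that is, Ω* is the support of a best (s,σ)-sparse ℓ2-approximation to z. -/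
/-- Euclidean (ℓ2) norm of a finitely indexed complex vector. -/
noncomputable def eNorm {ι : Type*} [Fintype ι] (x : ι → ℂ) : ℝ :=
  Real.sqrt (∑ i, ‖x i‖ ^ 2)

/-- The projection of a vector onto a support set: entries outside `Ω` are set to zero. -/
def projVec {𝕂 : Type*} [Zero 𝕂] {ι : Type*} [DecidableEq ι] (x : ι → 𝕂) (Ω : Finset ι) :
    ι → 𝕂 :=
  fun i => if i ∈ Ω then x i else 0

/-- A support set `Ω ⊆ Fin N × Fin n` is `(s,σ)`-sparse if at most `s` blocks are occupied
and each block contains at most `σ` indices. -/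
def BlockSparseSupport {N n : ℕ} (s σ : ℕ) (Ω : Finset (Fin N × Fin n)) : Prop :=
  (Ω.image Prod.fst).card ≤ s ∧ ∀ i : Fin N, (Ω.filter (fun p => p.1 = i)).card ≤ σ

lemma sum_sq_proj {ι : Type*} [Fintype ι] [DecidableEq ι] (x : ι → ℂ) (Ω : Finset ι) :
    ∑ i, ‖projVec x Ω i‖ ^ 2 = ∑ i ∈ Ω, ‖x i‖ ^ 2 := by
  unfold projVec
  have h : ∀ i, ‖if i ∈ Ω then x i else 0‖ ^ 2 = if i ∈ Ω then ‖x i‖ ^ 2 else 0 := by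
    intro i; split <;> simp
  simp only [h]
  rw [Finset.sum_ite_mem, Finset.univ_inter]

lemma sum_le_sum_card_le {α : Type*} (A C : Finset α) (f : α → ℝ)
    (hcard : A.card ≤ C.card) (hf0 : ∀ c ∈ C, 0 ≤ f c)
    (h : ∀ a ∈ A, ∀ c ∈ C, f a ≤ f c) : ∑ a ∈ A, f a ≤ ∑ c ∈ C, f c := by
  rcases C.eq_empty_or_nonempty with rfl | hC
  · simp only [Finset.card_empty, Nat.le_zero, Finset.card_eq_zero] at hcard
    simp [hcard]
  · set m := C.inf' hC f with hm
    have hm0 : 0 ≤ m := by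
      obtain ⟨c, hc, hcm⟩ := Finset.exists_mem_eq_inf' hC f
      rw [hm, hcm]; exact hf0 c hc
    have h1 : ∑ a ∈ A, f a ≤ A.card • m :=
      Finset.sum_le_card_nsmul A f m (fun a ha => Finset.le_inf' hC f (fun c hc => h a ha c hc))
    have h2 : C.card • m ≤ ∑ c ∈ C, f c :=
      Finset.card_nsmul_le_sum C f m (fun c hc => Finset.inf'_le f hc)
    calc ∑ a ∈ A, f a ≤ A.card • m := h1
      _ ≤ C.card • m := by
          simp only [nsmul_eq_mul]
          exact mul_le_mul_of_nonneg_right (by exact_mod_cast hcard) hm0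
      _ ≤ ∑ c ∈ C, f c := h2

theorem hierarchical_thresholding_optimal {N n s σ : ℕ} (hs : s ≤ N) (hσ : σ ≤ n)
    (z : Fin N × Fin n → ℂ) (T : Fin N → Finset (Fin n)) (S : Finset (Fin N))
    (hTcard : ∀ i, (T i).card = σ)
    (hTopt : ∀ i : Fin N, ∀ T' : Finset (Fin n), T'.card = σ →
      ∑ j ∈ T', ‖z (i, j)‖ ^ 2 ≤ ∑ j ∈ T i, ‖z (i, j)‖ ^ 2)
    (hScard : S.card = s)
    (hSopt : ∀ i ∈ S, ∀ i' ∉ S, ∑ j ∈ T i', ‖z (i', j)‖ ^ 2 ≤ ∑ j ∈ T i, ‖z (i, j)‖ ^ 2) :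
    ∀ Sig : Finset (Fin N × Fin n), BlockSparseSupport s σ Sig →
      eNorm (projVec z Sig) ≤ eNorm (projVec z (S.biUnion (fun i => {i} ×ˢ T i))) := by
  intro Sig ⟨hB, hrow⟩
  unfold eNorm
  apply Real.sqrt_le_sqrt
  rw [sum_sq_proj, sum_sq_proj]
  -- value of a row
  set f : Fin N → ℝ := fun i => ∑ j ∈ T i, ‖z (i, j)‖ ^ 2 with hf
  have hf0 : ∀ i, 0 ≤ f i := fun i => Finset.sum_nonneg (fun j _ => sq_nonneg _)
  -- RHS equals sum over S of f
  have hRHS : ∑ p ∈ S.biUnion (fun i => {i} ×ˢ T i), ‖z p‖ ^ 2 = ∑ i ∈ S, f i := by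
    rw [Finset.sum_biUnion]
    · apply Finset.sum_congr rfl
      intro i _
      rw [Finset.singleton_product, Finset.sum_map]
      rfl
    · intro a _ b _ hab
      simp only [Finset.disjoint_left]
      intro p hp hq
      simp only [Finset.mem_product, Finset.mem_singleton] at hp hq
      exact hab (hp.1 ▸ hq.1.symm ▸ rfl)
  rw [hRHS]
  -- LHS: split by block
  set B := Sig.image Prod.fst with hBdef
  have hLHS : ∑ p ∈ Sig, ‖z p‖ ^ 2
      = ∑ i ∈ B, ∑ p ∈ Sig.filter (fun p => p.1 = i), ‖z p‖ ^ 2 := by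
    rw [Finset.sum_fiberwise_of_maps_to]
    intro p hp
    exact Finset.mem_image_of_mem _ hp
  rw [hLHS]
  -- each block sum ≤ f i
  have hblock : ∀ i, ∑ p ∈ Sig.filter (fun p => p.1 = i), ‖z p‖ ^ 2 ≤ f i := by
    intro i
    set J := (Sig.filter (fun p => p.1 = i)).image Prod.snd with hJ
    have hJcard : J.card ≤ σ := le_trans (Finset.card_image_le) (hrow i)
    have hrw : ∑ p ∈ Sig.filter (fun p => p.1 = i), ‖z p‖ ^ 2
        = ∑ j ∈ J, ‖z (i, j)‖ ^ 2 := by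
      rw [hJ, Finset.sum_image]
      · apply Finset.sum_congr rfl
        intro p hp
        have := (Finset.mem_filter.mp hp).2
        rw [← this]
      · intro p hp q hq hpq
        have h1 := (Finset.mem_filter.mp hp).2
        have h2 := (Finset.mem_filter.mp hq).2
        exact Prod.ext (h1.trans h2.symm) hpq
    rw [hrw]
    obtain ⟨T', hJT', hT'card⟩ := Finset.exists_superset_card_eq hJcard
      (by simpa using hσ : σ ≤ (Finset.univ : Finset (Fin n)).card)
    calc ∑ j ∈ J, ‖z (i, j)‖ ^ 2 ≤ ∑ j ∈ T', ‖z (i, j)‖ ^ 2 :=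
          Finset.sum_le_sum_of_subset_of_nonneg hJT' (fun j _ _ => sq_nonneg _)
      _ ≤ f i := hTopt i T' hT'card
  calc ∑ i ∈ B, ∑ p ∈ Sig.filter (fun p => p.1 = i), ‖z p‖ ^ 2
      ≤ ∑ i ∈ B, f i := Finset.sum_le_sum (fun i _ => hblock i)
    _ ≤ ∑ i ∈ S, f i := by
        rw [← Finset.sum_inter_add_sum_sdiff B S f, ← Finset.sum_inter_add_sum_sdiff S B f,
          Finset.inter_comm S B]
        apply add_le_add_right
        apply sum_le_sum_card_le
        · have h1 : (B \ S).card = B.card - (B ∩ S).card := Finset.card_sdiff_add_card_inter B S ▸ by omega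
          have h2 : (S \ B).card = S.card - (S ∩ B).card := Finset.card_sdiff_add_card_inter S B ▸ by omega
          rw [h1, h2, Finset.inter_comm S B]
          have := hScard
          omega
        · exact fun c _ => hf0 c
        · intro a ha c hc
          exact hSopt c (Finset.mem_sdiff.mp hc).1 a (Finset.mem_sdiff.mp ha).2
end

section
/- Let z, x ∈ ℂ^d and Ω, Ω' ⊆ Fin d with supp(x) ⊆ Ω. If ‖z·P_{Ω'}‖ ≥ ‖z·P_Ω‖, then ‖x·P_{Ω∖Ω'}‖ ≤ √2 · ‖(z − x)·P_{ΩΔΩ'}‖, where ΩΔΩ' = (Ω∖Ω') ∪ (Ω'∖Ω) is the symmetric difference and ‖·‖ is the Euclidean norm. -/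
lemma eNorm_proj_eq {ι : Type*} [Fintype ι] [DecidableEq ι] (v : ι → ℂ) (S : Finset ι) :
    eNorm (projVec v S) = Real.sqrt (∑ i ∈ S, ‖v i‖ ^ 2) := by
  unfold eNorm projVec
  congr 1
  have : ∀ i, ‖(if i ∈ S then v i else 0 : ℂ)‖ ^ 2 = if i ∈ S then ‖v i‖ ^ 2 else 0 := by
    intro i; split <;> simp
  simp_rw [this]
  rw [Finset.sum_ite_mem, Finset.univ_inter]

lemma eNorm_eq_norm {ι : Type*} [Fintype ι] (u : ι → ℂ) :
    eNorm u = ‖(WithLp.equiv 2 (ι → ℂ)).symm u‖ := by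
  rw [EuclideanSpace.norm_eq]; rfl

lemma eNorm_add_le {ι : Type*} [Fintype ι] (u v : ι → ℂ) :
    eNorm (u + v) ≤ eNorm u + eNorm v := by
  rw [eNorm_eq_norm, eNorm_eq_norm, eNorm_eq_norm]
  exact norm_add_le ((WithLp.equiv 2 (ι → ℂ)).symm u) ((WithLp.equiv 2 (ι → ℂ)).symm v)

theorem thresholding_consequence {d : ℕ} (z x : Fin d → ℂ) (Ω Ω' : Finset (Fin d))
    (hsupp : ∀ j, x j ≠ 0 → j ∈ Ω)
    (h : eNorm (projVec z Ω) ≤ eNorm (projVec z Ω')) :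
    eNorm (projVec x (Ω \ Ω')) ≤
      Real.sqrt 2 * eNorm (projVec (z - x) ((Ω \ Ω') ∪ (Ω' \ Ω))) := by
  set A := Ω \ Ω' with hA
  set B := Ω' \ Ω with hB
  -- x vanishes on B
  have hxB : ∀ i ∈ B, x i = 0 := by
    intro i hi
    by_contra hne
    exact (Finset.mem_sdiff.mp hi).2 (hsupp i hne)
  -- from h : sum over A ≤ sum over B of ‖z‖²
  have hAB : (∑ i ∈ A, ‖z i‖ ^ 2) ≤ ∑ i ∈ B, ‖z i‖ ^ 2 := by
    have h' : (∑ i ∈ Ω, ‖z i‖ ^ 2) ≤ ∑ i ∈ Ω', ‖z i‖ ^ 2 := by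
      rw [eNorm_proj_eq, eNorm_proj_eq] at h
      exact (Real.sqrt_le_sqrt_iff (by positivity)).mp h
    have e1 := Finset.sum_inter_add_sum_sdiff Ω Ω' (fun i => ‖z i‖ ^ 2)
    have e2 := Finset.sum_inter_add_sum_sdiff Ω' Ω (fun i => ‖z i‖ ^ 2)
    rw [Finset.inter_comm] at e2
    linarith
  have hBz : (∑ i ∈ B, ‖z i‖ ^ 2) = ∑ i ∈ B, ‖(z - x) i‖ ^ 2 := by
    apply Finset.sum_congr rfl
    intro i hi
    simp [hxB i hi]
  set sA : ℝ := ∑ i ∈ A, ‖(z - x) i‖ ^ 2 with hsA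
  set sB : ℝ := ∑ i ∈ B, ‖(z - x) i‖ ^ 2 with hsB
  have hsA0 : 0 ≤ sA := Finset.sum_nonneg fun i _ => sq_nonneg _
  have hsB0 : 0 ≤ sB := Finset.sum_nonneg fun i _ => sq_nonneg _
  -- triangle inequality on A
  have hsplit : projVec x A = projVec (x - z) A + projVec z A := by
    funext i
    simp only [projVec, Pi.add_apply, Pi.sub_apply]
    split <;> ring
  have htri : eNorm (projVec x A) ≤ eNorm (projVec (x - z) A) + eNorm (projVec z A) := by
    rw [hsplit]; exact eNorm_add_le _ _
  have hxz : eNorm (projVec (x - z) A) = Real.sqrt sA := by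
    rw [eNorm_proj_eq, hsA]
    congr 1
    apply Finset.sum_congr rfl
    intro i _
    rw [show (x - z) i = -((z - x) i) by simp, norm_neg]
  have hzA : eNorm (projVec z A) ≤ Real.sqrt sB := by
    rw [eNorm_proj_eq]
    apply Real.sqrt_le_sqrt
    rw [← hBz]
    exact hAB
  -- sum over union
  have hdisj : Disjoint A B := disjoint_sdiff_sdiff
  have hunion : eNorm (projVec (z - x) (A ∪ B)) = Real.sqrt (sA + sB) := by
    rw [eNorm_proj_eq, Finset.sum_union hdisj]
  rw [hunion]
  have key : Real.sqrt sA + Real.sqrt sB ≤ Real.sqrt 2 * Real.sqrt (sA + sB) := by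
    have h2 : (Real.sqrt 2) ^ 2 = 2 := Real.sq_sqrt (by norm_num)
    have hS : (Real.sqrt (sA + sB)) ^ 2 = sA + sB := Real.sq_sqrt (by linarith)
    have ha : (Real.sqrt sA) ^ 2 = sA := Real.sq_sqrt hsA0
    have hb : (Real.sqrt sB) ^ 2 = sB := Real.sq_sqrt hsB0
    nlinarith [sq_nonneg (Real.sqrt sA - Real.sqrt sB), Real.sqrt_nonneg sA,
      Real.sqrt_nonneg sB, Real.sqrt_nonneg 2, Real.sqrt_nonneg (sA + sB),
      mul_nonneg (Real.sqrt_nonneg 2) (Real.sqrt_nonneg (sA + sB))]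
  calc eNorm (projVec x A) ≤ eNorm (projVec (x - z) A) + eNorm (projVec z A) := htri
    _ ≤ Real.sqrt sA + Real.sqrt sB := by rw [hxz]; linarith
    _ ≤ Real.sqrt 2 * Real.sqrt (sA + sB) := key
end
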